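/- Every Jordan block J(λ, n) with |λ| = 1 is strongly c-reversible in GL(n, ℂ): there exists an upper triangular matrix B with B * conj(B) = I and B J(λ,n) B⁻¹ = (conj J(λ,n))⁻¹. -/

import Mathlib

open Matrix

/-- The `n × n` Jordan block with eigenvalue `λ`. -/
def jordanBlock (lam : ℂ) (n : ℕ) : Matrix (Fin n) (Fin n) ℂ :=
  Matrix.of fun i j => if (j : ℕ) = i then lam else if (j : ℕ) = i + 1 then 1 else 0

open Finset


/-- entries of the real involution `A`. -/
noncomputable def aent (i j : ℕ) : ℂ :=
  if i ≤ j then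
    (if i = 0 then (if j = 0 then 1 else 0) else (-1) ^ j * ((j - 1).choose (i - 1) : ℕ))
  else 0

lemma aent_of_lt {i j : ℕ} (h : j < i) : aent i j = 0 := by
  simp [aent, Nat.not_le.mpr h]

lemma aent_succ_succ (i u : ℕ) : aent (i + 1) (u + 1) = (-1) ^ (u + 1) * (u.choose i : ℕ) := by
  unfold aent
  simp only [Nat.succ_ne_zero, if_false, Nat.succ_sub_one]
  split_ifs with h
  · rfl
  · have : u < i := by omega
    simp [Nat.choose_eq_zero_of_lt this]

lemma aent_succ_zero (i : ℕ) : aent (i + 1) 0 = 0 := by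
  simp [aent]

lemma aent_rec (i j : ℕ) : aent i j + aent (i + 1) (j + 1) + aent (i + 1) j = 0 := by
  rcases i with _ | t
  · rcases j with _ | u
    · simp [aent]
    · rw [aent_succ_succ, show (0:ℕ)+1 = 0+1 from rfl]
      have h0 : aent 0 (u+1) = 0 := by simp [aent]
      rw [h0, aent_succ_succ]
      simp [pow_succ]
  · rcases Nat.lt_trichotomy j (t + 1) with h | h | h
    · rcases j with _ | u
      · rw [aent_of_lt (by omega), aent_succ_zero, aent_succ_succ]
        simp [Nat.choose_eq_zero_of_lt (show 0 < t + 1 by omega)]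
      · rw [aent_of_lt (by omega), aent_succ_succ, aent_succ_succ]
        rw [Nat.choose_eq_zero_of_lt (by omega), Nat.choose_eq_zero_of_lt (by omega)]
        simp
    · subst h
      rcases Nat.exists_eq_add_of_le (show 1 ≤ t + 1 by omega) with ⟨u, hu⟩
      rw [aent_succ_succ, aent_succ_succ, aent_of_lt (by omega)]
      simp [pow_succ, Nat.choose_self]
    · rcases j with _ | u
      · omega
      · rw [aent_succ_succ, aent_succ_succ, aent_succ_succ]
        rw [Nat.choose_succ_succ u t]
        push_cast
        ring


lemma alt_choose_complex (n : ℕ) :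
    (∑ m ∈ range (n + 1), ((-1) ^ m * n.choose m : ℂ)) = if n = 0 then 1 else 0 := by
  have h := Int.alternating_sum_range_choose (n := n)
  have := congrArg (fun z : ℤ => (z : ℂ)) h
  push_cast at this
  rw [this]

lemma key_sum (m s : ℕ) :
    (∑ u ∈ range (m + 1), ((-1 : ℂ) ^ u * (m.choose u : ℕ) * (u.choose s : ℕ)))
      = if m = s then (-1 : ℂ) ^ s else 0 := by
  rcases lt_or_ge m s with h | h
  · rw [if_neg (by omega)]
    apply Finset.sum_eq_zero
    intro u hu
    simp only [mem_range] at hu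
    rw [Nat.choose_eq_zero_of_lt (show u < s by omega)]
    simp
  · have hsub : range (m + 1) = Ico 0 (m + 1) := by rw [range_eq_Ico]
    have h1 : (∑ u ∈ range (m + 1), ((-1 : ℂ) ^ u * (m.choose u : ℕ) * (u.choose s : ℕ)))
        = ∑ u ∈ Ico s (m + 1), ((-1 : ℂ) ^ u * (m.choose u : ℕ) * (u.choose s : ℕ)) := by
      rw [hsub]
      apply (Finset.sum_subset (Ico_subset_Ico (by omega) le_rfl) _).symm
      intro u hu hnu
      simp only [mem_Ico] at hu hnu
      rw [Nat.choose_eq_zero_of_lt (show u < s by omega)]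
      simp
    rw [h1, Finset.sum_Ico_eq_sum_range]
    have h2 : ∀ t ∈ range (m + 1 - s), ((-1 : ℂ) ^ (s + t) * (m.choose (s + t) : ℕ) * ((s + t).choose s : ℕ))
        = ((-1 : ℂ) ^ s * (m.choose s : ℕ)) * ((-1 : ℂ) ^ t * ((m - s).choose t : ℕ)) := by
      intro t ht
      simp only [mem_range] at ht
      have hcm : m.choose (s + t) * (s + t).choose s = m.choose s * (m - s).choose t := by
        rw [Nat.choose_mul (by omega)]
        congr 1
        congr 1
        omega
      have : ((m.choose (s + t) : ℂ)) * ((s + t).choose s : ℕ) = (m.choose s : ℕ) * ((m - s).choose t : ℕ) := by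
        exact_mod_cast congrArg (fun x : ℕ => (x : ℂ)) hcm
      rw [pow_add, mul_assoc, this]
      ring
    rw [Finset.sum_congr rfl h2, ← Finset.mul_sum]
    have h3 : m + 1 - s = (m - s) + 1 := by omega
    rw [h3, alt_choose_complex]
    rcases eq_or_lt_of_le h with he | hlt
    · subst he
      simp
    · rw [if_neg (by omega), if_neg (by omega)]
      simp

lemma aent_sq {n : ℕ} (i k : ℕ) (hi : i < n) (hk : k < n) :
    (∑ j : Fin n, aent i (j : ℕ) * aent (j : ℕ) k) = if i = k then 1 else 0 := by
  rw [Fin.sum_univ_eq_sum_range (fun j => aent i j * aent j k) n]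
  rcases i with _ | t
  · rw [Finset.sum_eq_single 0]
    · have : aent 0 0 = 1 := by simp [aent]
      rw [this, one_mul]
      rcases k with _ | s
      · simp [aent]
      · simp [aent]
    · intro j _ hj
      have : aent 0 j = 0 := by
        rcases j with _ | u
        · omega
        · simp [aent]
      rw [this, zero_mul]
    · intro h
      exact absurd (Finset.mem_range.mpr (by omega)) h
  · rcases k with _ | s
    · rw [if_neg (by omega)]
      apply Finset.sum_eq_zero
      intro j _
      rcases j with _ | u
      · rw [aent_succ_zero, zero_mul]
      · rw [show aent (u+1) 0 = 0 from aent_of_lt (by omega), mul_zero]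
    · have hshrink : (∑ j ∈ Finset.range n, aent (t+1) j * aent j (s+1))
          = ∑ j ∈ Finset.range (s + 2), aent (t+1) j * aent j (s+1) := by
        apply (Finset.sum_subset (Finset.range_subset_range.mpr (by omega)) _).symm
        intro j _ hj
        simp only [Finset.mem_range] at hj
        rw [aent_of_lt (show s + 1 < j by omega), mul_zero]
      rw [hshrink, Finset.sum_range_succ']
      rw [aent_succ_zero, zero_mul, add_zero]
      have hterm : ∀ u ∈ Finset.range (s + 1), aent (t+1) (u+1) * aent (u+1) (s+1)
          = ((-1:ℂ) ^ (s+1) * (-1)) * ((-1:ℂ) ^ u * ((s).choose u : ℕ) * ((u).choose t : ℕ)) := by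
        intro u _
        rw [aent_succ_succ, aent_succ_succ]
        rw [pow_succ]
        ring
      rw [Finset.sum_congr rfl hterm, ← Finset.mul_sum, key_sum]
      rcases eq_or_ne s t with he | hne
      · subst he
        rw [if_pos rfl, if_pos rfl]
        rw [pow_succ]
        have h2 : ((-1:ℂ))^s * (-1)^s = 1 := by rw [← mul_pow]; norm_num
        rw [show (-1:ℂ)^s * -1 * -1 * (-1)^s = ((-1:ℂ)^s * (-1)^s) * ((-1) * (-1)) by ring, h2]
        norm_num
      · rw [if_neg hne, if_neg (by omega), mul_zero]

lemma aent_conj (i j : ℕ) : (starRingEnd ℂ) (aent i j) = aent i j := by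
  unfold aent
  split_ifs <;> simp

def NmatX (n : ℕ) : Matrix (Fin n) (Fin n) ℂ :=
  Matrix.of fun i j => if (j : ℕ) = (i : ℕ) + 1 then 1 else 0

noncomputable def Bmat (lam : ℂ) (n : ℕ) : Matrix (Fin n) (Fin n) ℂ :=
  Matrix.of fun i j => (starRingEnd ℂ lam) ^ ((i : ℕ) + (j : ℕ)) * aent i j

lemma sum_ite_val {n : ℕ} (f : Fin n → ℂ) (v : ℕ) :
    (∑ l : Fin n, if (l : ℕ) = v then f l else 0) = if h : v < n then f ⟨v, h⟩ else 0 := by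
  split_ifs with h
  · rw [Finset.sum_eq_single ⟨v, h⟩]
    · simp
    · intro l _ hl
      rw [if_neg (by simpa [Fin.ext_iff] using hl)]
    · simp
  · apply Finset.sum_eq_zero
    intro l _
    rw [if_neg]
    intro hc
    exact h (hc ▸ l.isLt)

lemma Nmul_apply {n : ℕ} (X : Matrix (Fin n) (Fin n) ℂ) (i k : Fin n) :
    (NmatX n * X) i k = if h : (i : ℕ) + 1 < n then X ⟨(i : ℕ) + 1, h⟩ k else 0 := by
  rw [Matrix.mul_apply]
  have hterm : ∀ l : Fin n, NmatX n i l * X l k = if (l : ℕ) = (i : ℕ) + 1 then X l k else 0 := by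
    intro l
    simp only [NmatX, Matrix.of_apply]
    split_ifs <;> simp
  rw [Finset.sum_congr rfl (fun l _ => hterm l), sum_ite_val]

lemma mulN_apply {n : ℕ} (X : Matrix (Fin n) (Fin n) ℂ) (i k : Fin n) :
    (X * NmatX n) i k = if h : 0 < (k : ℕ) then X i ⟨(k : ℕ) - 1, by omega⟩ else 0 := by
  rw [Matrix.mul_apply]
  rcases Nat.eq_zero_or_pos (k : ℕ) with hk | hk
  · rw [dif_neg (by omega)]
    apply Finset.sum_eq_zero
    intro l _
    simp only [NmatX, Matrix.of_apply]
    rw [if_neg (by omega), mul_zero]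
  · rw [dif_pos hk]
    have hterm : ∀ l : Fin n, X i l * NmatX n l k = if (l : ℕ) = (k : ℕ) - 1 then X i l else 0 := by
      intro l
      simp only [NmatX, Matrix.of_apply]
      split_ifs with h1 h2 <;> first | ring1 | (exfalso; omega)
    rw [Finset.sum_congr rfl (fun l _ => hterm l), sum_ite_val, dif_pos (by omega : (k:ℕ) - 1 < n)]

lemma jordan_eq (lam : ℂ) (n : ℕ) :
    jordanBlock lam n = lam • (1 : Matrix (Fin n) (Fin n) ℂ) + NmatX n := by
  ext i j
  simp only [jordanBlock, NmatX, Matrix.add_apply, Matrix.smul_apply, Matrix.one_apply,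
    Matrix.of_apply, smul_eq_mul, Fin.ext_iff]
  split_ifs <;> first | ring1 | (exfalso; omega)

lemma jordan_conj_eq (lam : ℂ) (n : ℕ) :
    (jordanBlock lam n).map (starRingEnd ℂ) = (starRingEnd ℂ lam) • (1 : Matrix (Fin n) (Fin n) ℂ) + NmatX n := by
  ext i j
  simp only [jordanBlock, NmatX, Matrix.map_apply, Matrix.add_apply, Matrix.smul_apply,
    Matrix.one_apply, Matrix.of_apply, smul_eq_mul, Fin.ext_iff]
  split_ifs <;> first | ((exfalso; omega)) | simp

lemma Bmat_tri (lam : ℂ) (n : ℕ) : (Bmat lam n).BlockTriangular id := by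
  intro i j hij
  have h : (j : ℕ) < (i : ℕ) := hij
  simp only [Bmat, Matrix.of_apply]
  rw [aent_of_lt h, mul_zero]

lemma B_mul_conjB (lam : ℂ) (n : ℕ) (h1 : lam * starRingEnd ℂ lam = 1) :
    Bmat lam n * (Bmat lam n).map (starRingEnd ℂ) = 1 := by
  ext i k
  rw [Matrix.mul_apply]
  set μ := starRingEnd ℂ lam with hμ
  have hterm : ∀ j : Fin n, Bmat lam n i j * ((Bmat lam n).map (starRingEnd ℂ)) j k
      = (μ ^ (i : ℕ) * lam ^ (k : ℕ)) * (aent (i : ℕ) (j : ℕ) * aent (j : ℕ) (k : ℕ)) := by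
    intro j
    simp only [Bmat, Matrix.map_apply, Matrix.of_apply, _root_.map_mul, map_pow, aent_conj, ← hμ,
      Complex.conj_conj]
    rw [show (starRingEnd ℂ) μ = lam from by rw [hμ]; exact Complex.conj_conj lam]
    have e : (μ ^ ((i:ℕ)+(j:ℕ)) * aent i j) * (lam ^ ((j:ℕ)+(k:ℕ)) * aent j k)
        = ((lam * μ) ^ (j : ℕ)) * ((μ ^ (i:ℕ) * lam ^ (k:ℕ)) * (aent (i:ℕ) (j:ℕ) * aent (j:ℕ) (k:ℕ))) := by
      rw [pow_add, pow_add, mul_pow]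
      ring
    rw [e, h1, one_pow, one_mul]
  rw [Finset.sum_congr rfl (fun j _ => hterm j), ← Finset.mul_sum,
    aent_sq (i : ℕ) (k : ℕ) i.isLt k.isLt, Matrix.one_apply]
  by_cases h : i = k
  · subst h
    rw [if_pos rfl, if_pos rfl, mul_one, ← mul_pow, mul_comm μ lam, h1, one_pow]
  · rw [if_neg (fun hc => h (Fin.ext hc)), if_neg h, mul_zero]

lemma conj_rel (lam : ℂ) (n : ℕ) (h1 : lam * starRingEnd ℂ lam = 1) :
    ((starRingEnd ℂ lam) • (1 : Matrix (Fin n) (Fin n) ℂ) + NmatX n) * Bmat lam n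
      * (lam • (1 : Matrix (Fin n) (Fin n) ℂ) + NmatX n) = Bmat lam n := by
  set μ := starRingEnd ℂ lam with hμ
  set B := Bmat lam n with hB
  set N := NmatX n with hN
  have expand : (μ • (1 : Matrix (Fin n) (Fin n) ℂ) + N) * B * (lam • (1 : Matrix (Fin n) (Fin n) ℂ) + N)
      = (lam * μ) • B + (μ • (B * N) + (lam • (N * B) + N * (B * N))) := by
    simp only [add_mul, mul_add, Matrix.smul_mul, Matrix.mul_smul, Matrix.one_mul,
      Matrix.mul_one, smul_smul, Matrix.mul_assoc]
    abel
  rw [expand, h1, one_smul]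
  have hz : μ • (B * N) + (lam • (N * B) + N * (B * N)) = 0 := by
    ext i k
    have hkn := k.isLt
    simp only [Matrix.add_apply, Matrix.smul_apply, Matrix.zero_apply, smul_eq_mul]
    rw [mulN_apply, Nmul_apply, Nmul_apply]
    rcases Nat.lt_or_ge ((i : ℕ) + 1) n with hi | hi
    · rw [dif_pos hi, dif_pos hi, mulN_apply]
      rcases Nat.eq_zero_or_pos (k : ℕ) with hk | hk
      · rw [dif_neg (by omega), dif_neg (by omega)]
        have hB0 : B ⟨(i:ℕ)+1, hi⟩ k = 0 := by
          rw [hB]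
          simp only [Bmat, Matrix.of_apply]
          rw [show ((k : ℕ)) = 0 from hk, aent_succ_zero, mul_zero]
        rw [hB0]
        ring
      · rw [dif_pos hk, dif_pos hk]
        simp only [hB, Bmat, Matrix.of_apply]
        obtain ⟨s, hs⟩ : ∃ s, (k : ℕ) = s + 1 := ⟨(k : ℕ) - 1, by omega⟩
        rw [hs]
        simp only [Nat.add_sub_cancel]
        have hrec := aent_rec (i : ℕ) s
        linear_combination (μ ^ ((i:ℕ) + 1 + s)) * hrec
          + μ ^ ((i:ℕ) + 1 + s) * aent ((i:ℕ) + 1) (s + 1) * h1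
    · rw [dif_neg (show ¬ ((i:ℕ) + 1 < n) by omega), dif_neg (show ¬ ((i:ℕ) + 1 < n) by omega)]
      rcases Nat.eq_zero_or_pos (k : ℕ) with hk | hk
      · rw [dif_neg (by omega)]
        ring
      · rw [dif_pos hk]
        have hB0 : B i ⟨(k:ℕ) - 1, by omega⟩ = 0 := by
          rw [hB]
          simp only [Bmat, Matrix.of_apply]
          rw [aent_of_lt (by omega), mul_zero]
        rw [hB0]
        ring
  rw [hz, add_zero]


/-- Every Jordan block `J(λ, n)` with `|λ| = 1` is strongly c-reversible:
there is an upper triangular `B` with `B * conj B = I` and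
`B J(λ,n) B⁻¹ = (conj J(λ,n))⁻¹`. -/
theorem jordanBlock_unit_modulus_strongly_c_reversible (n : ℕ) (lam : ℂ)
    (hlam : ‖lam‖ = 1) :
    ∃ B : Matrix (Fin n) (Fin n) ℂ, IsUnit B ∧
      B.BlockTriangular id ∧
      B * B.map (starRingEnd ℂ) = 1 ∧
      B * jordanBlock lam n * B⁻¹ = ((jordanBlock lam n).map (starRingEnd ℂ))⁻¹ := by
  have h1 : lam * starRingEnd ℂ lam = 1 := by
    rw [Complex.mul_conj, Complex.normSq_eq_norm_sq, hlam]
    norm_num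
  have hlam0 : lam ≠ 0 := by
    intro h
    rw [h] at hlam
    simp at hlam
  have hμ0 : starRingEnd ℂ lam ≠ 0 := by
    simpa using hlam0
  set B := Bmat lam n with hB
  have hBc : B * B.map (starRingEnd ℂ) = 1 := B_mul_conjB lam n h1
  have hdet : B.det * (B.map (starRingEnd ℂ)).det = 1 := by
    rw [← Matrix.det_mul, hBc, Matrix.det_one]
  have hdetU : IsUnit B.det := isUnit_iff_exists_inv.mpr ⟨_, hdet⟩
  have hBU : IsUnit B := (Matrix.isUnit_iff_isUnit_det _).mpr hdetU
  set Jc := (jordanBlock lam n).map (starRingEnd ℂ) with hJc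
  have hJct : Jc.BlockTriangular id := by
    intro i j hij
    have h : (j : ℕ) < (i : ℕ) := hij
    simp only [hJc, jordanBlock, Matrix.map_apply, Matrix.of_apply]
    rw [if_neg (by omega), if_neg (by omega), map_zero]
  have hJcdetU : IsUnit Jc.det := by
    rw [Matrix.det_of_upperTriangular hJct]
    have hdiag : ∀ i : Fin n, Jc i i = starRingEnd ℂ lam := by
      intro i
      simp [hJc, jordanBlock]
    rw [Finset.prod_congr rfl (fun i _ => hdiag i), Finset.prod_const]
    exact (isUnit_iff_ne_zero.mpr (pow_ne_zero _ hμ0))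
  have hE : Jc * B * jordanBlock lam n = B := by
    rw [hJc, jordan_conj_eq, hB, jordan_eq]
    exact conj_rel lam n h1
  refine ⟨B, hBU, Bmat_tri lam n, hBc, ?_⟩
  have h6 : Jc⁻¹ * Jc = 1 := Matrix.nonsing_inv_mul _ hJcdetU
  have h7 : B * B⁻¹ = 1 := Matrix.mul_nonsing_inv _ hdetU
  have h8 : Jc⁻¹ * B = B * jordanBlock lam n := by
    calc Jc⁻¹ * B = Jc⁻¹ * (Jc * B * jordanBlock lam n) := by rw [hE]
    _ = (Jc⁻¹ * Jc) * (B * jordanBlock lam n) := by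
        rw [Matrix.mul_assoc, Matrix.mul_assoc]
    _ = B * jordanBlock lam n := by rw [h6, one_mul]
  rw [← h8, Matrix.mul_assoc, h7, Matrix.mul_one]
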